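/- For every permutation π of [n], L(π) is the unique simple list L (symmetric 0/1 matrix with zero diagonal) such that the map id_n L equals π; that is, if L = (l_{ij}) is simple and for all i ∈ [n], i + |{j : i < j ≤ n, l_{ij} = 1}| − |{j : 1 ≤ j < i, l_{ij} = 1}| = π(i), then l_{ij} = 1 exactly when i < j and π(i) > π(j). -/
import Mathlib


open Finset

/-- Two permutations are adjacent if every element's position changes by at most one. -/
def Adjacent {n : ℕ} (π σ : Equiv.Perm (Fin n)) : Prop :=
  ∀ i, ((π i : ℤ) - (σ i : ℤ)).natAbs ≤ 1

/-- Number of times wires `i` and `j` swap in the sequence `T` of height `h`. -/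
def SwapCount {n : ℕ} (T : ℕ → Equiv.Perm (Fin n)) (h : ℕ) (i j : Fin n) : ℕ :=
  ((Finset.range (h - 1)).filter fun t => T t i = T (t+1) j ∧ T t j = T (t+1) i).card

/-- A tangle of height `h`: a nonempty sequence of permutations with consecutive ones adjacent. -/
def IsTangle {n : ℕ} (T : ℕ → Equiv.Perm (Fin n)) (h : ℕ) : Prop :=
  1 ≤ h ∧ ∀ t, t + 1 < h → Adjacent (T t) (T (t+1))

/-- A tangle starting at the identity realizing the list `l`. -/
def Realizes {n : ℕ} (T : ℕ → Equiv.Perm (Fin n)) (h : ℕ) (l : Fin n → Fin n → ℕ) : Prop :=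
  IsTangle T h ∧ T 0 = 1 ∧ ∀ i j, i ≠ j → SwapCount T h i j = l i j

/-- A list is feasible if some tangle starting at the identity realizes it. -/
def Feasible {n : ℕ} (l : Fin n → Fin n → ℕ) : Prop :=
  ∃ h T, Realizes T h l

/-- A list is consistent if the map `id_n L` is a permutation of `[n]`. -/
def Consistent {n : ℕ} (l : Fin n → Fin n → ℕ) : Prop :=
  ∃ ρ : Equiv.Perm (Fin n), ∀ i : Fin n,
    ((i : ℤ) + ((Finset.univ.filter fun j => i < j ∧ Odd (l i j)).card : ℤ)
      - ((Finset.univ.filter fun j => j < i ∧ Odd (l i j)).card : ℤ)) = (ρ i : ℤ)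


lemma card_lt_fin (n : ℕ) (c : Fin n) : (univ.filter fun v => v < c).card = c := by
  rw [show (univ.filter fun v => v < c) = Finset.Iio c by ext v; simp]
  simp

lemma perm_val_eq (n : ℕ) (π : Equiv.Perm (Fin n)) (i : Fin n) :
    (univ.filter fun j => π j < π i).card = (π i : ℕ) := by
  rw [← card_lt_fin n (π i)]
  apply Finset.card_bij (fun j _ => π j)
  · intro a ha; simp only [mem_filter, mem_univ, true_and] at ha ⊢; exact ha
  · intro a _ b _ h; exact π.injective h
  · intro b hb; simp only [mem_filter, mem_univ, true_and] at hb ⊢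
    exact ⟨π.symm b, by simpa using hb, by simp⟩

/-- L(π) is the unique simple list L with id_n L = π. -/
theorem Lpi_unique (n : ℕ) (π : Equiv.Perm (Fin n)) (l : Fin n → Fin n → ℕ)
    (hsym : ∀ i j, l i j = l j i) (hdiag : ∀ i, l i i = 0)
    (hsimple : ∀ i j, l i j ≤ 1)
    (hmap : ∀ i : Fin n,
      ((i : ℤ) + ((Finset.univ.filter fun j => i < j ∧ l i j = 1).card : ℤ)
        - ((Finset.univ.filter fun j => j < i ∧ l i j = 1).card : ℤ)) = (π i : ℤ)) :
    ∀ i j : Fin n, i < j → (l i j = 1 ↔ π j < π i) := by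
  have hinj : ∀ {a b : Fin n}, π a = π b → a = b := fun h => π.injective h
  have key : ∀ m : ℕ, ∀ i : Fin n, n - (π i : ℕ) ≤ m →
      ∀ j, π j < π i → (i < j → l i j = 1) ∧ (j < i → l i j = 0) := by
    intro m
    induction m with
    | zero => intro i hi; have := (π i).isLt; omega
    | succ m ih =>
      intro i _
      have IH : ∀ j' : Fin n, π i < π j' →
          ∀ k, π k < π j' → (j' < k → l j' k = 1) ∧ (k < j' → l j' k = 0) := by
        intro j' hj'
        apply ih
        have h1 : (π j' : ℕ) < n := (π j').isLt
        have h2 : (π i : ℕ) < (π j' : ℕ) := hj'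
        omega
      set A := univ.filter fun j => i < j ∧ l i j = 1 with hA
      set B := univ.filter fun j => j < i ∧ l i j = 1 with hB
      set A' := univ.filter fun j => i < j ∧ π j < π i with hA'
      set B' := univ.filter fun j => j < i ∧ π i < π j with hB'
      set X := univ.filter fun j => j < i ∧ π j < π i with hX
      have hAsub : A ⊆ A' := by
        intro j hj
        simp only [hA, hA', mem_filter, mem_univ, true_and] at hj ⊢
        refine ⟨hj.1, ?_⟩
        rcases lt_trichotomy (π j) (π i) with h | h | h
        · exact h
        · exact absurd (hinj h) (ne_of_gt hj.1)
        · have h0 : l j i = 0 := (IH j h i h).2 hj.1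
          rw [hsym i j] at hj
          omega
      have hB'sub : B' ⊆ B := by
        intro j hj
        simp only [hB, hB', mem_filter, mem_univ, true_and] at hj ⊢
        refine ⟨hj.1, ?_⟩
        have h1 : l j i = 1 := (IH j hj.2 i hj.2).1 hj.1
        rw [hsym i j]; exact h1
      -- counting identities
      have h1 : A'.card + X.card = (π i : ℕ) := by
        rw [← perm_val_eq n π i,
          ← Finset.card_filter_add_card_filter_not
            (s := univ.filter fun j => π j < π i) (p := fun j => i < j)]
        rw [Finset.filter_filter, Finset.filter_filter]
        congr 2
        · ext j; simp only [mem_filter, mem_univ, true_and, hA']; exact and_comm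
        · ext j
          simp only [mem_filter, mem_univ, true_and, hX]
          constructor
          · rintro ⟨a, b⟩; exact ⟨b, not_lt.mpr a.le⟩
          · rintro ⟨b, c⟩
            refine ⟨lt_of_le_of_ne (not_lt.mp c) ?_, b⟩
            rintro rfl; exact absurd b (lt_irrefl _)
      have h2 : X.card + B'.card = (i : ℕ) := by
        rw [← card_lt_fin n i,
          ← Finset.card_filter_add_card_filter_not
            (s := univ.filter fun v => v < i) (p := fun j => π j < π i)]
        rw [Finset.filter_filter, Finset.filter_filter]
        congr 1
        · congr 1
          ext j
          simp only [mem_filter, mem_univ, true_and, hB']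
          constructor
          · rintro ⟨a, b⟩; exact ⟨a, not_lt.mpr b.le⟩
          · rintro ⟨a, c⟩
            refine ⟨a, lt_of_le_of_ne (not_lt.mp c) ?_⟩
            intro h; exact (ne_of_lt a) (hinj h).symm
      have hm : (i : ℕ) + A.card = (π i : ℕ) + B.card := by
        have := hmap i
        rw [← hA, ← hB] at this
        push_cast at this
        omega
      have hca : A.card ≤ A'.card := Finset.card_le_card hAsub
      have hcb : B'.card ≤ B.card := Finset.card_le_card hB'sub
      have hAeq : A = A' := Finset.eq_of_subset_of_card_le hAsub (by omega)
      have hBeq : B' = B := Finset.eq_of_subset_of_card_le hB'sub (by omega)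
      intro j hj
      constructor
      · intro hij
        have : j ∈ A' := by simp only [hA', mem_filter, mem_univ, true_and]; exact ⟨hij, hj⟩
        rw [← hAeq] at this
        simp only [hA, mem_filter, mem_univ, true_and] at this
        exact this.2
      · intro hji
        by_contra h
        have hl1 : l i j = 1 := by have := hsimple i j; omega
        have : j ∈ B := by simp only [hB, mem_filter, mem_univ, true_and]; exact ⟨hji, hl1⟩
        rw [← hBeq] at this
        simp only [hB', mem_filter, mem_univ, true_and] at this
        exact absurd this.2 (not_lt.mpr hj.le)
  intro i j hij
  constructor
  · intro h1
    rcases lt_trichotomy (π j) (π i) with h | h | h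
    · exact h
    · exact absurd (hinj h) (ne_of_gt hij)
    · have h0 : l j i = 0 := (key n j (by omega) i h).2 hij
      rw [hsym i j] at h1; omega
  · intro h
    exact (key n i (by omega) j h).1 hij
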